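/- For the K-receiver combination network with two nested messages with two common receivers (common message M_{\overline{φ}} for all receivers, private message M_{\overline{K−1.K}} for receivers 1,...,K−2), the inequality 2R_{\overline{φ}} + R_{\overline{K−1.K}} ≤ C_{↓_{W_j}{\overline{K−1.K}}} + C_{W_{K−1}} + C_{W_K} holds for every achievable rate pair and every j ∈ [1:K−2], where ↓_{W_j}{\overline{K−1.K}} = {S ∈ W_j : S ∩ {K−1,K} = ∅}. The proof uses H(Y_{K−1}^n, Y_K^n, Y_j^n | M_{\overline{φ}}) ≤ H(Y_{K−1}^n|M_{\overline{φ}}) + H(Y_K^n|M_{\overline{φ}}) + H(Y_j^n | Y_{K−1}^n, Y_K^n, M_{\overline{φ}}), submodularity/chain rule of entropy, Fano's inequality, and the identity W_j \ (W_{K−1} ∪ W_K) = ↓_{W_j}{\overline{K−1.K}}. -/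

import Mathlib

open Finset

/-- Achievability over the `K`-receiver combination network with two nested
messages and two common receivers: the private message `M_{\bar{K-1.K}}`
(rate `R1`) must be decoded by receivers `0,…,K-3` (0-indexed) and the common
message `M_{\barφ}` (rate `R2`) by all `K` receivers. -/
def NestedTwoCommonAchievable (K : ℕ)
    (V : {S : Finset (Fin K) // S.Nonempty} → Type)
    [∀ S, Fintype (V S)] (R1 R2 : ℝ) : Prop :=
  ∀ ε : ℝ, 0 < ε → ∃ (n M1 M2 : ℕ), 0 < n ∧ 0 < M1 ∧ 0 < M2 ∧
    R1 - ε ≤ Real.logb 2 M1 / n ∧ R2 - ε ≤ Real.logb 2 M2 / n ∧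
    ∃ (enc : Fin M1 → Fin M2 → Fin n → ∀ S : {S : Finset (Fin K) // S.Nonempty}, V S)
      (dec : ∀ i : Fin K,
        (Fin n → ∀ T : {S : {S : Finset (Fin K) // S.Nonempty} // i ∈ S.1}, V T.1) →
          Fin M1 × Fin M2),
      ((univ.filter (fun mm : Fin M1 × Fin M2 =>
          ¬ ((∀ i : Fin K, (i : ℕ) < K - 2 →
                (dec i (fun t T => enc mm.1 mm.2 t T.1)).1 = mm.1) ∧
             (∀ i : Fin K,
                (dec i (fun t T => enc mm.1 mm.2 t T.1)).2 = mm.2)))).card : ℝ) ≤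
        ε * (M1 * M2)

set_option maxHeartbeats 1000000

/-- Elementary: `a ≤ b` if `a ≤ b + δ` for every `δ > 0`. -/
lemma aux_le_of_forall_pos (a b : ℝ) (h : ∀ δ : ℝ, 0 < δ → a ≤ b + δ) : a ≤ b := by
  by_contra hlt
  push_neg at hlt
  have := h ((a - b) / 2) (by linarith only [hlt])
  linarith only [this, hlt]

/-- `log₂` of the cardinality of a space of `n`-tuples of tuples indexed by `ι`. -/
lemma aux_logb_card_fun (n : ℕ) {ι : Type} [DecidableEq ι] [Fintype ι] (W : ι → Type)
    [∀ i, Fintype (W i)] [∀ i, Nonempty (W i)] :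
    Real.logb 2 (Fintype.card (Fin n → ∀ i, W i)) =
      (n : ℝ) * ∑ i, Real.logb 2 (Fintype.card (W i)) := by
  have h1 : Fintype.card (Fin n → ∀ i, W i) = (∏ i, Fintype.card (W i)) ^ n := by
    rw [Fintype.card_fun, Fintype.card_pi, Fintype.card_fin]
  have hne : ∀ i ∈ (univ : Finset ι), ((Fintype.card (W i) : ℝ)) ≠ 0 := by
    intro i _
    exact_mod_cast (Fintype.card_pos (α := W i)).ne'
  rw [h1]
  push_cast
  rw [Real.logb_pow, Real.logb_prod _ _ hne]

/-- Converse for the combination network with two nested messages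
and two common receivers: every achievable rate pair satisfies, for every private
receiver `j` (0-indexed `(j:ℕ) < K-2`),
`2 R2 + R1 ≤ C_{↓_{W_j}{\bar{K-1.K}}} + C_{W_{K-1}} + C_{W_K}`, where
`↓_{W_j}{\bar{K-1.K}} = {S ∈ W_j : S ∩ {K-1,K} = ∅}`, `C_S = log₂ |V S|`, and
receivers `K-1`, `K` are the 0-indexed `⟨K-2,_⟩`, `⟨K-1,_⟩`. -/
theorem stmt_14 (K : ℕ) (hK : 3 ≤ K)
    (V : {S : Finset (Fin K) // S.Nonempty} → Type)
    [∀ S, Fintype (V S)] [∀ S, Nonempty (V S)]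
    (R1 R2 : ℝ) (hach : NestedTwoCommonAchievable K V R1 R2) :
    ∀ j : Fin K, (j : ℕ) < K - 2 →
      2 * R2 + R1 ≤
        (∑ S ∈ univ.filter (fun S : {S : Finset (Fin K) // S.Nonempty} =>
            j ∈ S.1 ∧ (⟨K - 2, by omega⟩ : Fin K) ∉ S.1 ∧ (⟨K - 1, by omega⟩ : Fin K) ∉ S.1),
          Real.logb 2 (Fintype.card (V S))) +
        (∑ S ∈ univ.filter (fun S : {S : Finset (Fin K) // S.Nonempty} =>
            (⟨K - 2, by omega⟩ : Fin K) ∈ S.1),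
          Real.logb 2 (Fintype.card (V S))) +
        ∑ S ∈ univ.filter (fun S : {S : Finset (Fin K) // S.Nonempty} =>
            (⟨K - 1, by omega⟩ : Fin K) ∈ S.1),
          Real.logb 2 (Fintype.card (V S)) := by
  classical
  intro j hj
  set kA : Fin K := (⟨K - 2, by omega⟩ : Fin K) with hkA
  set kB : Fin K := (⟨K - 1, by omega⟩ : Fin K) with hkB
  set SC : ℝ := ∑ S ∈ univ.filter (fun S : {S : Finset (Fin K) // S.Nonempty} =>
      j ∈ S.1 ∧ kA ∉ S.1 ∧ kB ∉ S.1), Real.logb 2 (Fintype.card (V S)) with hSC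
  set SA : ℝ := ∑ S ∈ univ.filter (fun S : {S : Finset (Fin K) // S.Nonempty} =>
      kA ∈ S.1), Real.logb 2 (Fintype.card (V S)) with hSA
  set SB : ℝ := ∑ S ∈ univ.filter (fun S : {S : Finset (Fin K) // S.Nonempty} =>
      kB ∈ S.1), Real.logb 2 (Fintype.card (V S)) with hSB
  refine aux_le_of_forall_pos _ _ (fun δ hδ => ?_)
  -- choose ε
  set ε : ℝ := min (δ / 9) (1 / 2) with hε
  have hε0 : 0 < ε := lt_min (by linarith only [hδ]) (by norm_num)
  have hεhalf : ε ≤ 1 / 2 := min_le_right _ _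
  have h1ε : (0 : ℝ) < 1 - ε := by linarith only [hεhalf]
  have hεδ : 9 * ε ≤ δ := by
    have h := min_le_left (δ / 9) (1 / 2)
    rw [hε]
    linarith only [h]
  obtain ⟨n, M1, M2, hn, hM1, hM2, hR1, hR2, enc, dec, herr⟩ := hach ε hε0
  have hM1R : (0 : ℝ) < M1 := by exact_mod_cast hM1
  have hM2R : (0 : ℝ) < M2 := by exact_mod_cast hM2
  have hnR : (1 : ℝ) ≤ (n : ℝ) := by exact_mod_cast hn
  have hn0 : (0 : ℝ) < n := by linarith only [hnR]
  -- goodness predicate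
  set P : Fin M1 × Fin M2 → Prop := fun mm =>
    (∀ i : Fin K, (i : ℕ) < K - 2 →
        (dec i (fun t T => enc mm.1 mm.2 t T.1)).1 = mm.1) ∧
    (∀ i : Fin K, (dec i (fun t T => enc mm.1 mm.2 t T.1)).2 = mm.2) with hP
  have herr' : ((univ.filter (fun mm => ¬ P mm)).card : ℝ) ≤ ε * (M1 * M2) := by
    have heq : (univ.filter (fun mm => ¬ P mm)) =
        (univ.filter (fun mm : Fin M1 × Fin M2 =>
          ¬ ((∀ i : Fin K, (i : ℕ) < K - 2 →
                (dec i (fun t T => enc mm.1 mm.2 t T.1)).1 = mm.1) ∧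
             (∀ i : Fin K,
                (dec i (fun t T => enc mm.1 mm.2 t T.1)).2 = mm.2)))) :=
      Finset.filter_congr (fun mm _ => by rw [hP])
    rw [heq]
    exact herr
  -- per-common-message structures
  set G2 : Fin M2 → Finset (Fin M1) :=
    (fun m2 => univ.filter (fun m1 => P (m1, m2))) with hG2
  set oA : Fin M1 → Fin M2 →
      (Fin n → ∀ T : {S : {S : Finset (Fin K) // S.Nonempty} // kA ∈ S.1}, V T.1) :=
    (fun m1 m2 => fun t T => enc m1 m2 t T.1) with hoA
  set oB : Fin M1 → Fin M2 →
      (Fin n → ∀ T : {S : {S : Finset (Fin K) // S.Nonempty} // kB ∈ S.1}, V T.1) :=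
    (fun m1 m2 => fun t T => enc m1 m2 t T.1) with hoB
  set oC : Fin M1 → Fin M2 →
      (Fin n → ∀ T : {S : {S : Finset (Fin K) // S.Nonempty} //
          j ∈ S.1 ∧ kA ∉ S.1 ∧ kB ∉ S.1}, V T.1) :=
    (fun m1 m2 => fun t T => enc m1 m2 t T.1) with hoC
  set A2 := (fun m2 => (G2 m2).image (fun m1 => oA m1 m2)) with hA2
  set B2 := (fun m2 => (G2 m2).image (fun m1 => oB m1 m2)) with hB2
  -- membership in G2 gives the decoding facts
  have hmemG2 : ∀ m2 : Fin M2, ∀ m1 ∈ G2 m2,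
      ((∀ i : Fin K, (i : ℕ) < K - 2 →
          (dec i (fun t T => enc m1 m2 t T.1)).1 = m1) ∧
       (∀ i : Fin K, (dec i (fun t T => enc m1 m2 t T.1)).2 = m2)) := by
    intro m2 m1 hm1
    simp only [hG2, Finset.mem_filter, Finset.mem_univ, true_and] at hm1
    rw [hP] at hm1
    exact hm1
  -- injectivity bound per m2
  have hinj : ∀ m2 : Fin M2,
      (G2 m2).card ≤ (A2 m2).card * (B2 m2).card *
        Fintype.card (Fin n → ∀ T : {S : {S : Finset (Fin K) // S.Nonempty} //
          j ∈ S.1 ∧ kA ∉ S.1 ∧ kB ∉ S.1}, V T.1) := by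
    intro m2
    have hmaps : ∀ m1 ∈ G2 m2,
        ((oA m1 m2, oB m1 m2), oC m1 m2) ∈ (A2 m2 ×ˢ B2 m2) ×ˢ
          (univ : Finset (Fin n → ∀ T : {S : {S : Finset (Fin K) // S.Nonempty} //
            j ∈ S.1 ∧ kA ∉ S.1 ∧ kB ∉ S.1}, V T.1)) := by
      intro m1 hm1
      simp only [Finset.mem_product, Finset.mem_univ, and_true]
      exact ⟨Finset.mem_image_of_mem _ hm1, Finset.mem_image_of_mem _ hm1⟩
    have hinjOn : Set.InjOn (fun m1 => ((oA m1 m2, oB m1 m2), oC m1 m2)) ↑(G2 m2) := by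
      intro m1 hm1 m1' hm1' heq
      simp only [Finset.mem_coe] at hm1 hm1'
      simp only [Prod.mk.injEq] at heq
      obtain ⟨⟨hAeq, hBeq⟩, hCeq⟩ := heq
      rw [hoA] at hAeq
      rw [hoB] at hBeq
      rw [hoC] at hCeq
      have hoj : (fun t (T : {S : {S : Finset (Fin K) // S.Nonempty} // j ∈ S.1}) =>
          enc m1 m2 t T.1) =
          (fun t (T : {S : {S : Finset (Fin K) // S.Nonempty} // j ∈ S.1}) =>
            enc m1' m2 t T.1) := by
        funext t T
        by_cases hA' : kA ∈ T.1.1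
        · exact congrFun (congrFun hAeq t) ⟨T.1, hA'⟩
        · by_cases hB' : kB ∈ T.1.1
          · exact congrFun (congrFun hBeq t) ⟨T.1, hB'⟩
          · exact congrFun (congrFun hCeq t) ⟨T.1, ⟨T.2, hA', hB'⟩⟩
      have h1 : (dec j (fun t T => enc m1 m2 t T.1)).1 = m1 :=
        (hmemG2 m2 m1 hm1).1 j hj
      have h1' : (dec j (fun t T => enc m1' m2 t T.1)).1 = m1' :=
        (hmemG2 m2 m1' hm1').1 j hj
      rw [hoj] at h1
      rw [h1] at h1'
      exact h1'
    have h := Finset.card_le_card_of_injOn _ hmaps hinjOn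
    simpa [Finset.card_product] using h
  -- disjointness of images across m2
  have hdecA : ∀ m2 : Fin M2, ∀ y ∈ A2 m2, (dec kA y).2 = m2 := by
    intro m2 y hy
    simp only [hA2] at hy
    obtain ⟨m1, hm1, rfl⟩ := Finset.mem_image.mp hy
    exact (hmemG2 m2 m1 hm1).2 kA
  have hdecB : ∀ m2 : Fin M2, ∀ y ∈ B2 m2, (dec kB y).2 = m2 := by
    intro m2 y hy
    simp only [hB2] at hy
    obtain ⟨m1, hm1, rfl⟩ := Finset.mem_image.mp hy
    exact (hmemG2 m2 m1 hm1).2 kB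
  have hdisjA : ∀ m2 ∈ (univ : Finset (Fin M2)), ∀ m2' ∈ (univ : Finset (Fin M2)),
      m2 ≠ m2' → Disjoint (A2 m2) (A2 m2') := by
    intro m2 _ m2' _ hne
    rw [Finset.disjoint_left]
    intro y hy hy'
    exact hne ((hdecA m2 y hy).symm.trans (hdecA m2' y hy'))
  have hdisjB : ∀ m2 ∈ (univ : Finset (Fin M2)), ∀ m2' ∈ (univ : Finset (Fin M2)),
      m2 ≠ m2' → Disjoint (B2 m2) (B2 m2') := by
    intro m2 _ m2' _ hne
    rw [Finset.disjoint_left]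
    intro y hy hy'
    exact hne ((hdecB m2 y hy).symm.trans (hdecB m2' y hy'))
  have hsumA : ∑ m2 : Fin M2, (A2 m2).card ≤
      Fintype.card (Fin n → ∀ T : {S : {S : Finset (Fin K) // S.Nonempty} //
        kA ∈ S.1}, V T.1) := by
    rw [← Finset.card_biUnion hdisjA]
    exact Finset.card_le_univ _
  have hsumB : ∑ m2 : Fin M2, (B2 m2).card ≤
      Fintype.card (Fin n → ∀ T : {S : {S : Finset (Fin K) // S.Nonempty} //
        kB ∈ S.1}, V T.1) := by
    rw [← Finset.card_biUnion hdisjB]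
    exact Finset.card_le_univ _
  -- total good count
  have hfiber : ∑ m2 : Fin M2, (G2 m2).card = (univ.filter P).card := by
    rw [Finset.card_eq_sum_card_fiberwise (f := fun mm : Fin M1 × Fin M2 => mm.2)
      (t := (univ : Finset (Fin M2))) (fun x _ => Finset.mem_univ _)]
    refine Finset.sum_congr rfl (fun m2 _ => ?_)
    refine Finset.card_bij (fun m1 _ => (m1, m2)) ?_ ?_ ?_
    · intro m1 hm1
      simp only [hG2, Finset.mem_filter, Finset.mem_univ, true_and] at hm1
      exact Finset.mem_filter.mpr ⟨Finset.mem_filter.mpr ⟨Finset.mem_univ _, hm1⟩, rfl⟩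
    · intro a _ b _ hab
      exact congrArg Prod.fst hab
    · intro mm hmm
      simp only [Finset.mem_filter, Finset.mem_univ, true_and] at hmm
      have hmmeq : (mm.1, m2) = mm := by rw [← hmm.2]
      refine ⟨mm.1, ?_, hmmeq⟩
      simp only [hG2, Finset.mem_filter, Finset.mem_univ, true_and]
      rw [hmmeq]
      exact hmm.1
  have hcardsplit : (univ.filter P).card +
      (univ.filter (fun mm => ¬ P mm)).card = M1 * M2 := by
    rw [Finset.card_filter_add_card_filter_not, Finset.card_univ,
      Fintype.card_prod, Fintype.card_fin, Fintype.card_fin]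
  have hgood : (1 - ε) * (M1 * M2) ≤ ((univ.filter P).card : ℝ) := by
    set x : ℕ := (univ.filter P).card with hx
    set y : ℕ := (univ.filter (fun mm => ¬ P mm)).card with hy
    have h2 : (x : ℝ) + (y : ℝ) = (M1 : ℝ) * M2 := by
      exact_mod_cast congrArg (Nat.cast (R := ℝ)) hcardsplit
    have h3 : (1 - ε) * ((M1 : ℝ) * M2) = (M1 : ℝ) * M2 - ε * ((M1 : ℝ) * M2) := by ring
    have h4 : ε * ((M1 : ℝ) * (M2 : ℝ)) = ε * ((M1 : ℝ) * M2) := by ring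
    linarith only [herr', h2, h3]
  -- real-valued quantities
  set a : Fin M2 → ℝ := fun m2 => ((A2 m2).card : ℝ) with ha
  set b : Fin M2 → ℝ := fun m2 => ((B2 m2).card : ℝ) with hb
  set g : Fin M2 → ℝ := fun m2 => ((G2 m2).card : ℝ) with hg
  set cA : ℝ := (Fintype.card (Fin n → ∀ T : {S : {S : Finset (Fin K) // S.Nonempty} //
      kA ∈ S.1}, V T.1) : ℝ) with hcA
  set cB : ℝ := (Fintype.card (Fin n → ∀ T : {S : {S : Finset (Fin K) // S.Nonempty} //
      kB ∈ S.1}, V T.1) : ℝ) with hcB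
  set cC : ℝ := (Fintype.card (Fin n → ∀ T : {S : {S : Finset (Fin K) // S.Nonempty} //
      j ∈ S.1 ∧ kA ∉ S.1 ∧ kB ∉ S.1}, V T.1) : ℝ) with hcC
  have hga : ∀ m2, g m2 ≤ a m2 * b m2 * cC := by
    intro m2
    simp only [ha, hb, hg, hcC]
    exact_mod_cast hinj m2
  have hgM1 : ∀ m2, g m2 ≤ (M1 : ℝ) := by
    intro m2
    have h : (G2 m2).card ≤ M1 := by
      simpa using Finset.card_le_card (Finset.subset_univ (G2 m2))
    simp only [hg]
    exact_mod_cast h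
  have hg0 : ∀ m2, 0 ≤ g m2 := fun m2 => Nat.cast_nonneg _
  have ha0 : ∀ m2, 0 ≤ a m2 := fun m2 => Nat.cast_nonneg _
  have hb0 : ∀ m2, 0 ≤ b m2 := fun m2 => Nat.cast_nonneg _
  have hcC0 : (0 : ℝ) ≤ cC := Nat.cast_nonneg _
  have hcAB0 : (0 : ℝ) ≤ cA * cB := mul_nonneg (Nat.cast_nonneg _) (Nat.cast_nonneg _)
  -- ∑ g ≤ √M1 * ∑ √g
  have hE : ∑ m2, g m2 ≤ Real.sqrt M1 * ∑ m2, Real.sqrt (g m2) := by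
    rw [Finset.mul_sum]
    refine Finset.sum_le_sum (fun m2 _ => ?_)
    calc g m2 = Real.sqrt (g m2) * Real.sqrt (g m2) := (Real.mul_self_sqrt (hg0 m2)).symm
      _ ≤ Real.sqrt (M1 : ℝ) * Real.sqrt (g m2) :=
        mul_le_mul_of_nonneg_right (Real.sqrt_le_sqrt (hgM1 m2)) (Real.sqrt_nonneg _)
  -- √g ≤ √cC * √(a b)
  have hF : ∑ m2, Real.sqrt (g m2) ≤ Real.sqrt cC * ∑ m2, Real.sqrt (a m2 * b m2) := by
    rw [Finset.mul_sum]
    refine Finset.sum_le_sum (fun m2 _ => ?_)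
    calc Real.sqrt (g m2) ≤ Real.sqrt (a m2 * b m2 * cC) := Real.sqrt_le_sqrt (hga m2)
      _ = Real.sqrt cC * Real.sqrt (a m2 * b m2) := by
          rw [Real.sqrt_mul (mul_nonneg (ha0 m2) (hb0 m2)), mul_comm]
  -- Cauchy–Schwarz
  have hG : ∑ m2, Real.sqrt (a m2 * b m2) ≤ Real.sqrt (cA * cB) := by
    have hcs := Finset.sum_sq_le_sum_mul_sum_of_sq_eq_mul (univ : Finset (Fin M2))
      (r := fun m2 => Real.sqrt (a m2 * b m2)) (f := a) (g := b)
      (fun m2 _ => ha0 m2) (fun m2 _ => hb0 m2)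
      (fun m2 _ => Real.sq_sqrt (mul_nonneg (ha0 m2) (hb0 m2)))
    have hsa : ∑ m2, a m2 ≤ cA := by
      simp only [ha, hcA]
      exact_mod_cast hsumA
    have hsb : ∑ m2, b m2 ≤ cB := by
      simp only [hb, hcB]
      exact_mod_cast hsumB
    have hsa0 : (0 : ℝ) ≤ ∑ m2, a m2 := Finset.sum_nonneg (fun m2 _ => ha0 m2)
    have hsb0 : (0 : ℝ) ≤ ∑ m2, b m2 := Finset.sum_nonneg (fun m2 _ => hb0 m2)
    have hab : (∑ m2, a m2) * (∑ m2, b m2) ≤ cA * cB :=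
      mul_le_mul hsa hsb hsb0 (le_trans hsa0 hsa)
    rw [Real.le_sqrt (Finset.sum_nonneg (fun m2 _ => Real.sqrt_nonneg _)) hcAB0]
    calc (∑ m2, Real.sqrt (a m2 * b m2)) ^ 2 ≤ (∑ m2, a m2) * (∑ m2, b m2) := hcs
      _ ≤ cA * cB := hab
  -- combine the chain
  have hchain : (1 - ε) * ((M1 : ℝ) * M2) ≤
      Real.sqrt (M1 : ℝ) * (Real.sqrt cC * Real.sqrt (cA * cB)) := by
    have h0 : (1 - ε) * ((M1 : ℝ) * M2) ≤ ∑ m2, g m2 := by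
      have hfib : ((univ.filter P).card : ℝ) = ∑ m2 : Fin M2, ((G2 m2).card : ℝ) := by
        exact_mod_cast congrArg (Nat.cast (R := ℝ)) hfiber.symm
      calc (1 - ε) * ((M1 : ℝ) * M2) ≤ ((univ.filter P).card : ℝ) := hgood
        _ = ∑ m2, g m2 := hfib
    calc (1 - ε) * ((M1 : ℝ) * M2) ≤ ∑ m2, g m2 := h0
      _ ≤ Real.sqrt M1 * ∑ m2, Real.sqrt (g m2) := hE
      _ ≤ Real.sqrt M1 * (Real.sqrt cC * ∑ m2, Real.sqrt (a m2 * b m2)) :=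
          mul_le_mul_of_nonneg_left hF (Real.sqrt_nonneg _)
      _ ≤ Real.sqrt M1 * (Real.sqrt cC * Real.sqrt (cA * cB)) :=
          mul_le_mul_of_nonneg_left
            (mul_le_mul_of_nonneg_left hG (Real.sqrt_nonneg _)) (Real.sqrt_nonneg _)
  -- square it and divide by M1
  have hmain : (1 - ε) ^ 2 * (M1 : ℝ) * (M2 : ℝ) ^ 2 ≤ cA * cB * cC := by
    have hL0 : (0 : ℝ) ≤ (1 - ε) * ((M1 : ℝ) * M2) :=
      le_of_lt (mul_pos h1ε (mul_pos hM1R hM2R))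
    have h2 := mul_self_le_mul_self hL0 hchain
    have hA' : Real.sqrt (M1 : ℝ) * Real.sqrt (M1 : ℝ) = (M1 : ℝ) :=
      Real.mul_self_sqrt (le_of_lt hM1R)
    have hB' : Real.sqrt cC * Real.sqrt cC = cC := Real.mul_self_sqrt hcC0
    have hC' : Real.sqrt (cA * cB) * Real.sqrt (cA * cB) = cA * cB :=
      Real.mul_self_sqrt hcAB0
    have hRR : (Real.sqrt (M1 : ℝ) * (Real.sqrt cC * Real.sqrt (cA * cB))) *
        (Real.sqrt (M1 : ℝ) * (Real.sqrt cC * Real.sqrt (cA * cB))) =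
        (M1 : ℝ) * (cC * (cA * cB)) := by
      calc (Real.sqrt (M1 : ℝ) * (Real.sqrt cC * Real.sqrt (cA * cB))) *
          (Real.sqrt (M1 : ℝ) * (Real.sqrt cC * Real.sqrt (cA * cB))) =
          (Real.sqrt (M1 : ℝ) * Real.sqrt (M1 : ℝ)) * ((Real.sqrt cC * Real.sqrt cC) *
            (Real.sqrt (cA * cB) * Real.sqrt (cA * cB))) := by ring
        _ = (M1 : ℝ) * (cC * (cA * cB)) := by rw [hA', hB', hC']
    rw [hRR] at h2
    have h3 : (1 - ε) ^ 2 * (M1 : ℝ) * (M2 : ℝ) ^ 2 * (M1 : ℝ) ≤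
        (cA * cB * cC) * (M1 : ℝ) := by
      calc (1 - ε) ^ 2 * (M1 : ℝ) * (M2 : ℝ) ^ 2 * (M1 : ℝ) =
          ((1 - ε) * ((M1 : ℝ) * M2)) * ((1 - ε) * ((M1 : ℝ) * M2)) := by ring
        _ ≤ (M1 : ℝ) * (cC * (cA * cB)) := h2
        _ = (cA * cB * cC) * (M1 : ℝ) := by ring
    exact le_of_mul_le_mul_right h3 hM1R
  -- cards at least one
  have hcA1 : (1 : ℝ) ≤ cA := by
    rw [hcA]
    exact_mod_cast Fintype.card_pos
  have hcB1 : (1 : ℝ) ≤ cB := by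
    rw [hcB]
    exact_mod_cast Fintype.card_pos
  have hcC1 : (1 : ℝ) ≤ cC := by
    rw [hcC]
    exact_mod_cast Fintype.card_pos
  have hcA0 : (0 : ℝ) < cA := lt_of_lt_of_le one_pos hcA1
  have hcB0 : (0 : ℝ) < cB := lt_of_lt_of_le one_pos hcB1
  have hcC0' : (0 : ℝ) < cC := lt_of_lt_of_le one_pos hcC1
  -- take logs
  have hx1 : (0 : ℝ) < (1 - ε) ^ 2 * M1 := mul_pos (pow_pos h1ε 2) hM1R
  have hx2 : (0 : ℝ) < (1 - ε) ^ 2 * M1 * (M2 : ℝ) ^ 2 := mul_pos hx1 (pow_pos hM2R 2)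
  have hlog : Real.logb 2 ((1 - ε) ^ 2 * (M1 : ℝ) * (M2 : ℝ) ^ 2) ≤
      Real.logb 2 (cA * cB * cC) :=
    (Real.logb_le_logb (by norm_num) hx2 (mul_pos (mul_pos hcA0 hcB0) hcC0')).mpr hmain
  have hlogL : Real.logb 2 ((1 - ε) ^ 2 * (M1 : ℝ) * (M2 : ℝ) ^ 2) =
      2 * Real.logb 2 (1 - ε) + Real.logb 2 M1 + 2 * Real.logb 2 M2 := by
    rw [Real.logb_mul (ne_of_gt hx1) (ne_of_gt (pow_pos hM2R 2)),
      Real.logb_mul (ne_of_gt (pow_pos h1ε 2)) (ne_of_gt hM1R),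
      Real.logb_pow, Real.logb_pow]
    push_cast
    ring
  have hlogR : Real.logb 2 (cA * cB * cC) =
      Real.logb 2 cA + Real.logb 2 cB + Real.logb 2 cC := by
    rw [Real.logb_mul (ne_of_gt (mul_pos hcA0 hcB0)) (ne_of_gt hcC0'),
      Real.logb_mul (ne_of_gt hcA0) (ne_of_gt hcB0)]
  -- identify logs of cards with capacity sums
  have hcapA : Real.logb 2 cA = (n : ℝ) * SA := by
    have h := aux_logb_card_fun n
      (fun T : {S : {S : Finset (Fin K) // S.Nonempty} // kA ∈ S.1} => V T.1)
    have h2 : ∑ T : {S : {S : Finset (Fin K) // S.Nonempty} // kA ∈ S.1},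
        Real.logb 2 (Fintype.card (V T.1)) = SA := by
      rw [hSA]
      exact (Finset.sum_subtype
        (p := fun S : {S : Finset (Fin K) // S.Nonempty} => kA ∈ S.1)
        (univ.filter (fun S : {S : Finset (Fin K) // S.Nonempty} => kA ∈ S.1))
        (fun S => by simp) (fun S => Real.logb 2 (Fintype.card (V S)))).symm
    rw [hcA, ← h2]
    exact h
  have hcapB : Real.logb 2 cB = (n : ℝ) * SB := by
    have h := aux_logb_card_fun n
      (fun T : {S : {S : Finset (Fin K) // S.Nonempty} // kB ∈ S.1} => V T.1)
    have h2 : ∑ T : {S : {S : Finset (Fin K) // S.Nonempty} // kB ∈ S.1},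
        Real.logb 2 (Fintype.card (V T.1)) = SB := by
      rw [hSB]
      exact (Finset.sum_subtype
        (p := fun S : {S : Finset (Fin K) // S.Nonempty} => kB ∈ S.1)
        (univ.filter (fun S : {S : Finset (Fin K) // S.Nonempty} => kB ∈ S.1))
        (fun S => by simp) (fun S => Real.logb 2 (Fintype.card (V S)))).symm
    rw [hcB, ← h2]
    exact h
  have hcapC : Real.logb 2 cC = (n : ℝ) * SC := by
    have h := aux_logb_card_fun n
      (fun T : {S : {S : Finset (Fin K) // S.Nonempty} //
        j ∈ S.1 ∧ kA ∉ S.1 ∧ kB ∉ S.1} => V T.1)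
    have h2 : ∑ T : {S : {S : Finset (Fin K) // S.Nonempty} //
        j ∈ S.1 ∧ kA ∉ S.1 ∧ kB ∉ S.1},
        Real.logb 2 (Fintype.card (V T.1)) = SC := by
      rw [hSC]
      exact (Finset.sum_subtype
        (p := fun S : {S : Finset (Fin K) // S.Nonempty} => j ∈ S.1 ∧ kA ∉ S.1 ∧ kB ∉ S.1)
        (univ.filter (fun S : {S : Finset (Fin K) // S.Nonempty} => j ∈ S.1 ∧ kA ∉ S.1 ∧ kB ∉ S.1))
        (fun S => by simp) (fun S => Real.logb 2 (Fintype.card (V S)))).symm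
    rw [hcC, ← h2]
    exact h
  -- the ε-penalty
  have hpen : -Real.logb 2 (1 - ε) ≤ 3 * ε := by
    have hlog2pos : (0 : ℝ) < Real.log 2 := Real.log_pos (by norm_num)
    have hlog2 : (2 : ℝ) / 3 ≤ Real.log 2 := by
      linarith only [Real.log_two_gt_d9]
    have hinv : Real.log (1 - ε)⁻¹ ≤ (1 - ε)⁻¹ - 1 :=
      Real.log_le_sub_one_of_pos (by positivity)
    rw [Real.log_inv] at hinv
    have heq2 : (1 - ε)⁻¹ - 1 = ε / (1 - ε) := by field_simp; ring
    have hfr : ε / (1 - ε) ≤ 2 * ε := by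
      rw [div_le_iff₀ h1ε]
      have hq : (0 : ℝ) ≤ ε * (1 - 2 * ε) :=
        mul_nonneg hε0.le (by linarith only [hεhalf])
      nlinarith only [hq]
    have hlow : -Real.log (1 - ε) ≤ 2 * ε := by
      rw [heq2] at hinv; linarith only [hinv, hfr]
    rw [Real.logb, ← neg_div, div_le_iff₀ hlog2pos]
    have hq : (0 : ℝ) ≤ ε * (Real.log 2 - 2 / 3) :=
      mul_nonneg hε0.le (by linarith only [hlog2])
    nlinarith only [hlow, hq]
  -- rate arithmetic
  have hfinal : Real.logb 2 M1 / n + 2 * (Real.logb 2 M2 / n) ≤ SA + SB + SC + 6 * ε := by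
    have hstep : Real.logb 2 M1 + 2 * Real.logb 2 M2 ≤
        (n : ℝ) * (SA + SB + SC) + 6 * ε := by
      have h := hlog
      rw [hlogL, hlogR, hcapA, hcapB, hcapC] at h
      linarith only [h, hpen]
    have key : (Real.logb 2 M1 + 2 * Real.logb 2 M2) / n ≤ SA + SB + SC + 6 * ε := by
      rw [div_le_iff₀ hn0]
      calc Real.logb 2 M1 + 2 * Real.logb 2 M2 ≤ (n : ℝ) * (SA + SB + SC) + 6 * ε := hstep
        _ ≤ (SA + SB + SC + 6 * ε) * n := by
            have hq : (0 : ℝ) ≤ ((n : ℝ) - 1) * ε :=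
              mul_nonneg (by linarith only [hnR]) hε0.le
            nlinarith only [hq]
    have h5 : (Real.logb 2 M1 + 2 * Real.logb 2 M2) / n =
        Real.logb 2 M1 / n + 2 * (Real.logb 2 M2 / n) := by ring
    rw [h5] at key
    exact key
  calc 2 * R2 + R1 ≤ 2 * (Real.logb 2 M2 / n + ε) + (Real.logb 2 M1 / n + ε) := by
        linarith only [hR1, hR2]
    _ = Real.logb 2 M1 / n + 2 * (Real.logb 2 M2 / n) + 3 * ε := by ring
    _ ≤ SA + SB + SC + 6 * ε + 3 * ε := by linarith only [hfinal]
    _ ≤ SC + SA + SB + δ := by linarith only [hεδ]
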